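/- If λ is a regular cardinal in FK(κ,Γ) — i.e., λ carries a uniform, κ-complete, precipitous ideal I with P(λ)/I ∈ Γ — then λ is not in fix(κ,Γ). Hence FK(κ,Γ) and fix(κ,Γ) are disjoint. -/

import Mathlib

open Cardinal

/-- An ideal on the set of ordinals below `o`, as a collection of null subsets of `Iio o`. -/
structure OrdIdeal (o : Ordinal) where
  mem : Set Ordinal → Prop
  mono : ∀ s t : Set Ordinal, s ⊆ t → mem t → mem s
  union_mem : ∀ s t : Set Ordinal, mem s → mem t → mem (s ∪ t)
  proper : ¬ mem (Set.Iio o)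

/-- `δ`-completeness: closure under unions of fewer than `δ` members. -/
def OrdIdeal.Complete {o : Ordinal} (I : OrdIdeal o) (δ : Cardinal) : Prop :=
  ∀ i : Ordinal, i.card < δ → ∀ g : Ordinal → Set Ordinal,
    (∀ x < i, I.mem (g x)) → I.mem (⋃ x ∈ Set.Iio i, g x)

/-- Uniformity: every subset of `Iio o` of cardinality less than `|o|` is null. -/
def OrdIdeal.Uniform {o : Ordinal} (I : OrdIdeal o) : Prop :=
  ∀ s : Set Ordinal, s ⊆ Set.Iio o → #↥s < Cardinal.lift.{1, 0} o.card → I.mem s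

/-- `FK(κ,Γ) ∩ fix(κ,Γ) = ∅`.  Here `Γ`-membership of the quotient forcing and
precipitousness are abstract predicates, `GammaEmb` is the collection of ordinal-actions of
generic elementary embeddings arising from forcings in `Γ` with critical point `κ`, and
`hinterface` records that every uniform, κ-complete, κ⁺-incomplete, precipitous ideal `I`
on a regular `λ` with `P(λ)/I ∈ Γ` gives rise to a generic ultrapower embedding
`j ∈ GammaEmb` together with the representation function `ρ = f ↦ [f]` of the ultrapower:
`[f] < j(λ)` for `f : λ → λ`, and `[f] < [g]` whenever `f < g` modulo bounded sets (bounded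
sets are null since `I` is uniform).  Conclusion: any such `λ` is moved by some member of
`GammaEmb`, i.e., `λ ∉ fix(κ,Γ)`; hence `FK(κ,Γ)` and `fix(κ,Γ)` are disjoint. -/
theorem stmt16 (κ : Cardinal.{0})
    (InGamma : ∀ (Q : Type 1), (Q → Q → Prop) → Prop)
    (Precipitous : ∀ {o : Ordinal}, OrdIdeal o → Prop)
    (GammaEmb : Set (Ordinal → Ordinal))
    (hinterface : ∀ lam : Cardinal.{0}, lam.IsRegular →
      ∀ I : OrdIdeal lam.ord, I.Uniform → I.Complete κ → ¬ I.Complete (Order.succ κ) →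
        Precipitous I →
        InGamma {s : Set Ordinal // s ⊆ Set.Iio lam.ord ∧ ¬ I.mem s}
          (fun s t => I.mem (s.1 \ t.1)) →
        ∃ j ∈ GammaEmb, ∃ ρ : (Ordinal → Ordinal) → Ordinal,
          (∀ f : Ordinal → Ordinal, (∀ x < lam.ord, f x < lam.ord) → ρ f < j lam.ord) ∧
          ∀ f g : Ordinal → Ordinal,
            (∃ b < lam.ord, ∀ x, b ≤ x → x < lam.ord → f x < g x) → ρ f < ρ g) :
    ∀ lam : Cardinal.{0}, lam.IsRegular →
      (∃ I : OrdIdeal lam.ord, I.Uniform ∧ I.Complete κ ∧ ¬ I.Complete (Order.succ κ) ∧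
        Precipitous I ∧
        InGamma {s : Set Ordinal // s ⊆ Set.Iio lam.ord ∧ ¬ I.mem s}
          (fun s t => I.mem (s.1 \ t.1))) →
      lam.ord ∉ {o : Ordinal | ∀ j ∈ GammaEmb, j o = o} := by
  rintro lam hreg ⟨I, hu, hc, hnc, hp, hg⟩ hfix
  obtain ⟨j, hj, ρ, hρ1, hρ2⟩ := hinterface lam hreg I hu hc hnc hp hg
  have hjfix : j lam.ord = lam.ord := hfix j hj
  have hlim : Order.IsSuccLimit lam.ord := Cardinal.isSuccLimit_ord hreg.aleph0_le
  -- F α = ρ (const α) is strictly monotone on Iio lam.ord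
  set F : Ordinal → Ordinal := fun α => ρ (fun _ => α) with hF
  have hmono : ∀ α β, α < β → β < lam.ord → F α < F β := by
    intro α β hab _
    exact hρ2 _ _ ⟨0, hlim.pos, fun x _ _ => hab⟩
  have hself : ∀ α < lam.ord, α ≤ F α := by
    intro α
    induction α using Ordinal.induction with
    | h α ih =>
      intro hα
      rcases le_or_gt α (F α) with h | h
      · exact h
      · exact absurd ((ih (F α) h (h.trans hα)).trans_lt (hmono (F α) α h hα)) (lt_irrefl _)
  have hid : ρ id < lam.ord := by
    have := hρ1 id (fun x hx => hx)
    rwa [hjfix] at this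
  have hlt : ∀ α < lam.ord, F α < ρ id := by
    intro α hα
    refine hρ2 _ _ ⟨α + 1, hlim.succ_lt hα, fun x hx _ => ?_⟩
    exact lt_of_lt_of_le (Order.lt_succ α) hx
  exact absurd (hlt _ hid) (not_lt.2 (hself _ hid))
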